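/- Let t0 > 0 and α > 1 be real numbers. Then for every t ≥ t0 one has |∫_{t0}^t sin(s^α)/s ds| ≤ 3/(α·t0^α). -/

import Mathlib

open Real Set Filter MeasureTheory intervalIntegral

theorem int_sin_salpha_bound (t0 α : ℝ) (ht0 : 0 < t0) (hα : 1 < α) :
    ∀ t ≥ t0, |∫ s in t0..t, Real.sin (s ^ α) / s| ≤ 3 / (α * t0 ^ α) := by
  intro t ht
  have hα0 : 0 < α := lt_trans one_pos hα
  have hicc : uIcc t0 t = Icc t0 t := uIcc_of_le ht
  have hpos : ∀ s ∈ Icc t0 t, 0 < s := fun s hs => lt_of_lt_of_le ht0 hs.1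
  set u : ℝ → ℝ := fun s => α⁻¹ * s ^ (-α) with hu_def
  set u' : ℝ → ℝ := fun s => -s ^ (-α - 1) with hu'_def
  set v : ℝ → ℝ := fun s => -Real.cos (s ^ α) with hv_def
  set v' : ℝ → ℝ := fun s => Real.sin (s ^ α) * (α * s ^ (α - 1)) with hv'_def
  -- derivatives
  have hu : ∀ x ∈ uIcc t0 t, HasDerivAt u (u' x) x := by
    intro x hx
    rw [hicc] at hx
    have hx0 : x ≠ 0 := (hpos x hx).ne'
    have h := (Real.hasDerivAt_rpow_const (x := x) (p := -α) (Or.inl hx0)).const_mul α⁻¹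
    refine h.congr_deriv ?_
    rw [hu'_def]
    field_simp
  have hv : ∀ x ∈ uIcc t0 t, HasDerivAt v (v' x) x := by
    intro x hx
    rw [hicc] at hx
    have hx0 : x ≠ 0 := (hpos x hx).ne'
    have h1 : HasDerivAt (fun s : ℝ => s ^ α) (α * x ^ (α - 1)) x :=
      Real.hasDerivAt_rpow_const (Or.inl hx0)
    have h2 := ((Real.hasDerivAt_cos (x ^ α)).comp x h1).neg
    refine h2.congr_deriv ?_
    rw [hv'_def]
    ring
  -- integrability
  have hcu' : ContinuousOn u' (uIcc t0 t) := by
    rw [hicc]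
    exact (continuousOn_id.rpow_const fun x hx => Or.inl (hpos x hx).ne').neg
  have hcv : ContinuousOn v (uIcc t0 t) := by
    rw [hicc]
    exact (Real.continuous_cos.comp_continuousOn
      (continuousOn_id.rpow_const fun x hx => Or.inl (hpos x hx).ne')).neg
  have hcv' : ContinuousOn v' (uIcc t0 t) := by
    rw [hicc]
    exact (Real.continuous_sin.comp_continuousOn
      (continuousOn_id.rpow_const fun x hx => Or.inl (hpos x hx).ne')).mul
      (continuousOn_const.mul
        (continuousOn_id.rpow_const fun x hx => Or.inl (hpos x hx).ne'))
  have hu'int : IntervalIntegrable u' volume t0 t := hcu'.intervalIntegrable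
  have hv'int : IntervalIntegrable v' volume t0 t := hcv'.intervalIntegrable
  -- integration by parts
  have key : (∫ s in t0..t, Real.sin (s ^ α) / s)
      = u t * v t - u t0 * v t0 - ∫ s in t0..t, u' s * v s := by
    rw [← intervalIntegral.integral_mul_deriv_eq_deriv_mul hu hv hu'int hv'int]
    apply intervalIntegral.integral_congr
    intro s hs
    rw [hicc] at hs
    have hs0 : 0 < s := hpos s hs
    simp only [hu_def, hv'_def]
    have hr : s ^ (-α) * s ^ (α - 1) = s⁻¹ := by
      rw [← Real.rpow_add hs0]
      have he : -α + (α - 1) = -1 := by ring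
      rw [he]
      exact Real.rpow_neg_one s
    calc Real.sin (s ^ α) / s = Real.sin (s ^ α) * (α⁻¹ * α) * (s ^ (-α) * s ^ (α - 1)) := by
          rw [inv_mul_cancel₀ hα0.ne', hr, mul_one, div_eq_mul_inv]
      _ = α⁻¹ * s ^ (-α) * (Real.sin (s ^ α) * (α * s ^ (α - 1))) := by ring
  set K : ℝ := α⁻¹ * t0 ^ (-α) with hK_def
  have hK0 : 0 ≤ K := by positivity
  have ht0α : t ^ (-α) ≤ t0 ^ (-α) :=
    Real.rpow_le_rpow_of_nonpos ht0 ht (neg_nonpos.mpr hα0.le)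
  -- bound boundary terms
  have hbt : ∀ x : ℝ, t0 ≤ x → |u x * v x| ≤ K := by
    intro x hx
    have hx0 : 0 < x := lt_of_lt_of_le ht0 hx
    have h1 : |u x * v x| = α⁻¹ * x ^ (-α) * |Real.cos (x ^ α)| := by
      simp only [hu_def, hv_def]
      rw [abs_mul, abs_neg, abs_of_nonneg (by positivity)]
    rw [h1]
    have h2 : |Real.cos (x ^ α)| ≤ 1 := Real.abs_cos_le_one _
    have h3 : x ^ (-α) ≤ t0 ^ (-α) :=
      Real.rpow_le_rpow_of_nonpos ht0 hx (neg_nonpos.mpr hα0.le)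
    calc α⁻¹ * x ^ (-α) * |Real.cos (x ^ α)| ≤ α⁻¹ * x ^ (-α) * 1 := by
          apply mul_le_mul_of_nonneg_left h2; positivity
      _ = α⁻¹ * x ^ (-α) := mul_one _
      _ ≤ K := by
          rw [hK_def]
          exact mul_le_mul_of_nonneg_left h3 (by positivity)
  -- bound the remaining integral
  have hCint : |∫ s in t0..t, u' s * v s| ≤ K := by
    have h1 : |∫ s in t0..t, u' s * v s| ≤ ∫ s in t0..t, |u' s * v s| :=
      intervalIntegral.abs_integral_le_integral_abs ht
    have habsint : IntervalIntegrable (fun s => |u' s * v s|) volume t0 t :=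
      ((hcu'.mul hcv).abs).intervalIntegrable
    have hrint : IntervalIntegrable (fun s : ℝ => s ^ (-α - 1)) volume t0 t := by
      apply ContinuousOn.intervalIntegrable
      rw [hicc]
      exact continuousOn_id.rpow_const fun x hx => Or.inl (hpos x hx).ne'
    have h2 : (∫ s in t0..t, |u' s * v s|) ≤ ∫ s in t0..t, s ^ (-α - 1) := by
      apply intervalIntegral.integral_mono_on ht habsint hrint
      intro s hs
      have hs0 : 0 < s := hpos s hs
      simp only [hu'_def, hv_def]
      rw [abs_mul, abs_neg, abs_neg, abs_of_nonneg (Real.rpow_nonneg hs0.le _)]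
      calc s ^ (-α - 1) * |Real.cos (s ^ α)| ≤ s ^ (-α - 1) * 1 := by
            apply mul_le_mul_of_nonneg_left (Real.abs_cos_le_one _) (Real.rpow_nonneg hs0.le _)
        _ = s ^ (-α - 1) := mul_one _
    have h0mem : (0 : ℝ) ∉ uIcc t0 t := by
      rw [hicc]
      intro h0
      exact absurd (hpos 0 h0) (lt_irrefl 0)
    have h3 : (∫ s in t0..t, s ^ (-α - 1)) = (t ^ (-α) - t0 ^ (-α)) / (-α) := by
      rw [integral_rpow (Or.inr ⟨by intro h; apply hα0.ne'; linarith, h0mem⟩)]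
      norm_num
    have h4 : (t ^ (-α) - t0 ^ (-α)) / (-α) ≤ K := by
      rw [div_le_iff_of_neg (by linarith : (-α) < 0), hK_def]
      have htpos : (0:ℝ) ≤ t ^ (-α) := Real.rpow_nonneg (le_trans ht0.le ht) _
      have : K * (-α) = -(t0 ^ (-α)) := by
        rw [hK_def]; field_simp
      calc α⁻¹ * t0 ^ (-α) * (-α) = -(t0 ^ (-α)) := by field_simp
        _ ≤ t ^ (-α) - t0 ^ (-α) := by linarith
    linarith
  -- assemble
  have hA := hbt t ht
  have hB := hbt t0 le_rfl
  have hfinal : |∫ s in t0..t, Real.sin (s ^ α) / s| ≤ 3 * K := by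
    rw [key]
    have h1 : |u t * v t - u t0 * v t0 - (∫ s in t0..t, u' s * v s)|
        ≤ |u t * v t - u t0 * v t0| + |∫ s in t0..t, u' s * v s| := by
      simpa [sub_eq_add_neg] using abs_add_le (u t * v t - u t0 * v t0) (-(∫ s in t0..t, u' s * v s))
    have h2 : |u t * v t - u t0 * v t0| ≤ |u t * v t| + |u t0 * v t0| := by
      simpa [sub_eq_add_neg] using abs_add_le (u t * v t) (-(u t0 * v t0))
    linarith
  have hKeq : 3 * K = 3 / (α * t0 ^ α) := by
    rw [hK_def, Real.rpow_neg ht0.le]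
    field_simp
  linarith [hfinal, hKeq ▸ hfinal]
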